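/- In a complete ℝ-tree T, if two closed balls B(t, r) and B(t', r') intersect, then their intersection is again a closed ball: if neither ball contains the other, then B(t,r) ∩ B(t',r') is the closed ball centered at the unique point at distance (d(t,t') + r - r')/2 from t and (d(t,t') + r' - r)/2 from t', with radius (r + r' - d(t,t'))/2. -/
import Mathlib


/-- In a complete `ℝ`-tree (geodesic `0`-hyperbolic complete metric space), if two
closed balls `B(t,r)` and `B(t',r')` intersect and neither contains the other, then
their intersection is the closed ball centered at the unique point `c` at distance
`(d(t,t') + r - r')/2` from `t` and `(d(t,t') + r' - r)/2` from `t'`, with radius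
`(r + r' - d(t,t'))/2`. -/
theorem real_tree_ball_intersection
    {T : Type*} [MetricSpace T] [CompleteSpace T]
    (hgeo : ∀ x y : T, ∃ γ : ℝ → T, γ 0 = x ∧ γ (dist x y) = y ∧
      ∀ s u : ℝ, s ∈ Set.Icc 0 (dist x y) → u ∈ Set.Icc 0 (dist x y) →
        dist (γ s) (γ u) = |s - u|)
    (hhyp : ∀ x y z r : T,
      min ((dist x r + dist z r - dist x z) / 2) ((dist y r + dist z r - dist y z) / 2) ≤
        (dist x r + dist y r - dist x y) / 2)
    (t t' : T) (r r' : ℝ)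
    (hne : (Metric.closedBall t r ∩ Metric.closedBall t' r').Nonempty)
    (h1 : ¬ Metric.closedBall t r ⊆ Metric.closedBall t' r')
    (h2 : ¬ Metric.closedBall t' r' ⊆ Metric.closedBall t r) :
    ∃ c : T,
      dist t c = (dist t t' + r - r') / 2 ∧
      dist t' c = (dist t t' + r' - r) / 2 ∧
      (∀ c' : T, dist t c' = (dist t t' + r - r') / 2 →
        dist t' c' = (dist t t' + r' - r) / 2 → c' = c) ∧
      Metric.closedBall t r ∩ Metric.closedBall t' r' =
        Metric.closedBall c ((r + r' - dist t t') / 2) := by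
  obtain ⟨z, hz1, hz2⟩ := hne
  rw [Metric.mem_closedBall] at hz1 hz2
  have hd : dist t t' ≤ r + r' := by
    have h := dist_triangle t z t'
    rw [dist_comm t z] at h
    linarith
  obtain ⟨x, hx1, hx2⟩ := Set.not_subset.mp h1
  rw [Metric.mem_closedBall] at hx1 hx2
  push_neg at hx2
  have hxr : r' < r + dist t t' := by
    have h := dist_triangle x t t'
    linarith
  obtain ⟨y, hy1, hy2⟩ := Set.not_subset.mp h2
  rw [Metric.mem_closedBall] at hy1 hy2
  push_neg at hy2
  have hyr : r < r' + dist t t' := by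
    have h := dist_triangle y t' t
    rw [dist_comm t' t] at h
    linarith
  set a : ℝ := (dist t t' + r - r') / 2 with ha_def
  have ha0 : 0 ≤ a := by simp only [ha_def]; linarith
  have had : a ≤ dist t t' := by simp only [ha_def]; linarith
  obtain ⟨γ, hγ0, hγd, hγ⟩ := hgeo t t'
  refine ⟨γ a, ?_, ?_, ?_, ?_⟩
  · have := hγ 0 a ⟨le_refl 0, dist_nonneg⟩ ⟨ha0, had⟩
    rw [hγ0] at this
    rw [this, abs_of_nonpos (by linarith)]
    ring
  · have := hγ (dist t t') a ⟨dist_nonneg, le_refl _⟩ ⟨ha0, had⟩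
    rw [hγd] at this
    rw [this, abs_of_nonneg (by linarith)]
    ring
  all_goals
    have htc : dist t (γ a) = a := by
      have := hγ 0 a ⟨le_refl 0, dist_nonneg⟩ ⟨ha0, had⟩
      rw [hγ0] at this
      rw [this, abs_of_nonpos (by linarith)]; ring
    have htc' : dist t' (γ a) = dist t t' - a := by
      have := hγ (dist t t') a ⟨dist_nonneg, le_refl _⟩ ⟨ha0, had⟩
      rw [hγd] at this
      rw [this, abs_of_nonneg (by linarith)]
  · -- uniqueness
    intro c' hc1 hc2
    have h := hhyp t t' c' (γ a)
    rw [htc, htc'] at h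
    have hcc : dist c' (γ a) ≤ 0 := by
      rcases min_le_iff.mp h with h' | h' <;> [skip; skip] <;>
        { simp only [ha_def] at *; linarith }
    exact dist_le_zero.mp hcc
  · -- ball equality
    ext w
    simp only [Set.mem_inter_iff, Metric.mem_closedBall]
    constructor
    · rintro ⟨hw1, hw2⟩
      have h := hhyp t t' w (γ a)
      rw [htc, htc'] at h
      rw [dist_comm w t] at hw1
      rw [dist_comm w t'] at hw2
      rcases min_le_iff.mp h with h' | h' <;>
        { simp only [ha_def] at *; linarith }
    · intro hw
      constructor
      · have h := dist_triangle w (γ a) t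
        rw [dist_comm (γ a) t, htc] at h
        simp only [ha_def] at *; linarith
      · have h := dist_triangle w (γ a) t'
        rw [dist_comm (γ a) t', htc'] at h
        simp only [ha_def] at *; linarith
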